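/- Let G be a connected graph on n vertices and let K = {v_1, ..., v_p} be an independent set of G such that N(v_i) = N(v_j) for all i, j. Then all v_i have the same transmission ∂ = Tr(v_i), and ∂ + 2 is an eigenvalue of the distance Laplacian D^L(G) with multiplicity at least p - 1. -/

import Mathlib

open Matrix

/-- The transmission of a vertex: sum of distances to all other vertices. -/
noncomputable def transmission {V : Type*} [Fintype V] (G : SimpleGraph V) (v : V) : ℕ :=
  ∑ u, G.dist v u

/-- The distance Laplacian matrix `D^L(G) = Diag(Tr) - D(G)`. -/
noncomputable def distLapMatrix {V : Type*} [Fintype V] [DecidableEq V]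
    (G : SimpleGraph V) : Matrix V V ℝ :=
  fun u v => if u = v then (transmission G u : ℝ) else -(G.dist u v : ℝ)

/-- `μ` is an eigenvalue of the real matrix `M`. -/
def IsEigenvalue {V : Type*} [Fintype V] [DecidableEq V] (M : Matrix V V ℝ) (μ : ℝ) : Prop :=
  Module.End.HasEigenvalue (Matrix.toLin' M) μ

/-- The multiplicity of `μ` as an eigenvalue of `M` (dimension of the eigenspace). -/
noncomputable def eigMult {V : Type*} [Fintype V] [DecidableEq V]
    (M : Matrix V V ℝ) (μ : ℝ) : ℕ :=
  Module.finrank ℝ (Module.End.eigenspace (Matrix.toLin' M) μ)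

lemma dist_le_aux {V : Type*} (G : SimpleGraph V) (hG : G.Connected) {v w u : V}
    (h : G.neighborSet v = G.neighborSet w) (huw : u ≠ w) : G.dist u v ≤ G.dist u w := by
  obtain ⟨p, hp⟩ := (hG.preconnected u w).exists_walk_length_eq_dist
  obtain ⟨x, hwx, q, hq⟩ := SimpleGraph.Walk.exists_eq_cons_of_ne (Ne.symm huw) p.reverse
  have hxv : G.Adj x v := by
    have : x ∈ G.neighborSet w := hwx
    rw [← h] at this
    exact this.symm
  have hle := SimpleGraph.dist_le (q.reverse.concat hxv)
  have hlen : (q.reverse.concat hxv).length = p.length := by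
    have h1 : p.reverse.length = q.length + 1 := by rw [hq, SimpleGraph.Walk.length_cons]
    rw [SimpleGraph.Walk.length_reverse] at h1
    rw [SimpleGraph.Walk.length_concat, SimpleGraph.Walk.length_reverse, h1]
  omega

lemma dist_eq_aux {V : Type*} (G : SimpleGraph V) (hG : G.Connected) {v w u : V}
    (h : G.neighborSet v = G.neighborSet w) (huv : u ≠ v) (huw : u ≠ w) :
    G.dist u v = G.dist u w :=
  le_antisymm (dist_le_aux G hG h huw) (dist_le_aux G hG h.symm huv)

lemma dist_eq_two_aux {V : Type*} (G : SimpleGraph V) (hG : G.Connected) {v w : V}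
    (hvw : v ≠ w) (hadj : ¬ G.Adj v w) (h : G.neighborSet v = G.neighborSet w) :
    G.dist v w = 2 := by
  obtain ⟨p⟩ := hG.preconnected v w
  obtain ⟨x, hvx, q, _⟩ := SimpleGraph.Walk.exists_eq_cons_of_ne hvw p
  have hxw : G.Adj x w := by
    have : x ∈ G.neighborSet v := hvx
    rw [h] at this
    exact this.symm
  have hle := SimpleGraph.dist_le (SimpleGraph.Walk.cons hvx (SimpleGraph.Walk.cons hxw
    SimpleGraph.Walk.nil))
  simp only [SimpleGraph.Walk.length_cons, SimpleGraph.Walk.length_nil] at hle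
  have h0 : G.dist v w ≠ 0 := fun hc => hvw (hG.dist_eq_zero_iff.mp hc)
  have h1 : G.dist v w ≠ 1 := fun hc => hadj (SimpleGraph.dist_eq_one_iff_adj.mp hc)
  omega

/-- If `K` is an independent set of a connected graph `G` such that all vertices of `K` have
the same neighborhood, then all vertices of `K` have the same transmission `∂` and
`∂ + 2` is a distance Laplacian eigenvalue of multiplicity at least `|K| - 1`. -/
theorem stmt_5 {V : Type*} [Fintype V] [DecidableEq V] (G : SimpleGraph V)
    (hG : G.Connected) (K : Finset V)
    (hind : ∀ v ∈ K, ∀ w ∈ K, ¬ G.Adj v w)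
    (hN : ∀ v ∈ K, ∀ w ∈ K, G.neighborSet v = G.neighborSet w) :
    ∃ t : ℕ, (∀ v ∈ K, transmission G v = t) ∧
      K.card - 1 ≤ eigMult (distLapMatrix G) ((t : ℝ) + 2) := by
  rcases K.eq_empty_or_nonempty with hK | ⟨v₀, hv₀⟩
  · exact ⟨0, by simp [hK], by simp [hK]⟩
  set t := transmission G v₀ with ht
  -- distance between distinct vertices of K is 2
  have hdist2 : ∀ v ∈ K, ∀ w ∈ K, v ≠ w → G.dist v w = 2 := fun v hv w hw hvw =>
    dist_eq_two_aux G hG hvw (hind v hv w hw) (hN v hv w hw)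
  -- all transmissions equal
  have htr : ∀ v ∈ K, transmission G v = t := by
    intro v hv
    by_cases hvv : v = v₀
    · rw [hvv]
    have key : ∀ u : V, G.dist v u = G.dist v₀ (Equiv.swap v v₀ u) := by
      intro u
      by_cases hu1 : u = v
      · subst hu1
        rw [Equiv.swap_apply_left, SimpleGraph.dist_self, SimpleGraph.dist_self]
      by_cases hu2 : u = v₀
      · subst hu2
        rw [Equiv.swap_apply_right, hdist2 v hv u hv₀ hvv,
          hdist2 u hv₀ v hv (Ne.symm hvv)]
      · rw [Equiv.swap_apply_of_ne_of_ne hu1 hu2,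
          show G.dist v u = G.dist u v from SimpleGraph.dist_comm,
          show G.dist v₀ u = G.dist u v₀ from SimpleGraph.dist_comm]
        exact dist_eq_aux G hG (hN v hv v₀ hv₀) hu1 hu2
    exact Fintype.sum_equiv (Equiv.swap v v₀) _ _ key
  refine ⟨t, htr, ?_⟩
  -- eigenvectors
  set μ : ℝ := (t : ℝ) + 2 with hμ
  set M := distLapMatrix G with hM
  have hmem : ∀ v ∈ K, v ≠ v₀ →
      (Pi.single v 1 - Pi.single v₀ 1 : V → ℝ) ∈
        Module.End.eigenspace (Matrix.toLin' M) μ := by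
    intro v hv hvv
    rw [Module.End.mem_eigenspace_iff, Matrix.toLin'_apply]
    have : M *ᵥ (Pi.single v 1 - Pi.single v₀ 1) =
        M *ᵥ Pi.single v 1 - M *ᵥ Pi.single v₀ 1 := Matrix.mulVec_sub M _ _
    rw [this, Matrix.mulVec_single_one, Matrix.mulVec_single_one]
    funext u
    have hd2 : ((G.dist v v₀ : ℕ) : ℝ) = 2 := by
      rw [hdist2 v hv v₀ hv₀ hvv]; norm_num
    have hd2' : ((G.dist v₀ v : ℕ) : ℝ) = 2 := by
      rw [hdist2 v₀ hv₀ v hv (Ne.symm hvv)]; norm_num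
    simp only [Pi.sub_apply, Pi.smul_apply, smul_eq_mul, mul_one, Matrix.col_apply]
    by_cases hu1 : u = v
    · subst hu1
      simp only [hM, distLapMatrix, eq_self_iff_true, if_true, if_neg hvv, Pi.single_eq_same,
        Pi.single_eq_of_ne hvv, hd2]
      rw [htr u hv, hμ]; ring
    by_cases hu2 : u = v₀
    · subst hu2
      simp only [hM, distLapMatrix, eq_self_iff_true, if_true, if_neg (Ne.symm hvv),
        Pi.single_eq_same, Pi.single_eq_of_ne (Ne.symm hvv), hd2']
      rw [← ht, hμ]; ring
    · simp only [hM, distLapMatrix, if_neg hu1, if_neg hu2,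
        Pi.single_eq_of_ne hu1, Pi.single_eq_of_ne hu2]
      rw [dist_eq_aux G hG (hN v hv v₀ hv₀) hu1 hu2]
      ring
  -- linear independence
  set b : ↥(K.erase v₀) → ↥(Module.End.eigenspace (Matrix.toLin' M) μ) :=
    fun v => ⟨Pi.single v.1 1 - Pi.single v₀ 1,
      hmem v.1 (Finset.mem_of_mem_erase v.2) (Finset.ne_of_mem_erase v.2)⟩ with hb
  have hli0 : LinearIndependent ℝ
      (fun v : ↥(K.erase v₀) => (Pi.single v.1 1 - Pi.single v₀ 1 : V → ℝ)) := by
    rw [Fintype.linearIndependent_iff]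
    intro g hg v
    have h1 := congrFun hg v.1
    have hv0 : (v : V) ≠ v₀ := Finset.ne_of_mem_erase v.2
    simp only [Finset.sum_apply, Pi.smul_apply, Pi.sub_apply, Pi.zero_apply,
      smul_eq_mul] at h1
    rw [Finset.sum_eq_single v] at h1
    · simpa [Pi.single_eq_of_ne hv0] using h1
    · intro i _ hiv
      have hne : (i : V) ≠ (v : V) := fun hc => hiv (Subtype.ext hc)
      simp [Pi.single_eq_of_ne hne.symm, Pi.single_eq_of_ne hv0]
    · intro hc
      exact absurd (Finset.mem_univ v) hc
  have hli : LinearIndependent ℝ b :=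
    LinearIndependent.of_comp ((Module.End.eigenspace (Matrix.toLin' M) μ).subtype) hli0
  have hcard := hli.fintype_card_le_finrank
  rw [Fintype.card_coe, Finset.card_erase_of_mem hv₀] at hcard
  exact hcard
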